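/- Let X ~ Sk(0, σ²) be a Skellam random variable. Then for any p ∈ (0,1], with probability at least 1 − p, |X| ≤ 2σ√(log(2/p)) + √2 log(2/p). -/

import Mathlib

open MeasureTheory ProbabilityTheory NNReal

/-- The Skellam distribution `Sk(m, v)`: the law of `m + N₁ - N₂` where
`N₁, N₂` are independent `Poisson(v/2)`. -/
noncomputable def skellamMeasure (m : ℤ) (v : ℝ≥0) : Measure ℤ :=
  Measure.map (fun p : ℕ × ℕ => m + (p.1 : ℤ) - (p.2 : ℤ))
    ((poissonMeasure (v / 2)).prod (poissonMeasure (v / 2)))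

open Real
open scoped ENNReal


private lemma le_of_hasDerivAt_nonneg {f f' : ℝ → ℝ}
    (hd : ∀ y, HasDerivAt f (f' y) y) (h0 : ∀ y, 0 ≤ y → 0 ≤ f' y)
    {x : ℝ} (hx : 0 ≤ x) : f 0 ≤ f x := by
  have hdiff : Differentiable ℝ f := fun y => (hd y).differentiableAt
  have hmono : MonotoneOn f (Set.Ici 0) := by
    apply monotoneOn_of_deriv_nonneg (convex_Ici 0) hdiff.continuous.continuousOn
      hdiff.differentiableOn
    intro y hy
    rw [interior_Ici] at hy
    rw [(hd y).deriv]
    exact h0 y (le_of_lt hy)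
  exact hmono Set.self_mem_Ici hx hx

private lemma sinh_le_mul_cosh {x : ℝ} (hx : 0 ≤ x) : sinh x ≤ x * cosh x := by
  have h := le_of_hasDerivAt_nonneg (f := fun y => y * cosh y - sinh y)
    (f' := fun y => y * sinh y) (fun y => by
      have := ((hasDerivAt_id y).mul (Real.hasDerivAt_cosh y)).sub (Real.hasDerivAt_sinh y)
      exact this.congr_deriv (by simp [id_eq]; try ring))
    (fun y hy => mul_nonneg hy (Real.sinh_nonneg_iff.2 hy)) hx
  simp at h; linarith

private lemma cosh_sub_one_le {x : ℝ} (hx : 0 ≤ x) : cosh x - 1 ≤ x ^ 2 / 2 * cosh x := by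
  have h := le_of_hasDerivAt_nonneg (f := fun y => y ^ 2 / 2 * cosh y - cosh y + 1)
    (f' := fun y => (y * cosh y - sinh y) + y ^ 2 / 2 * sinh y) (fun y => by
      have := (((hasDerivAt_pow 2 y).div_const 2).mul (Real.hasDerivAt_cosh y)).sub
        (Real.hasDerivAt_cosh y) |>.add_const 1
      exact this.congr_deriv (by simp [id_eq]; try ring))
    (fun y hy => add_nonneg (by linarith [sinh_le_mul_cosh hy])
      (mul_nonneg (by positivity) (Real.sinh_nonneg_iff.2 hy))) hx
  simp at h; linarith

private lemma sinh_le_cubic {x : ℝ} (hx : 0 ≤ x) : sinh x ≤ x + x ^ 3 / 6 * cosh x := by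
  have h := le_of_hasDerivAt_nonneg (f := fun y => y + y ^ 3 / 6 * cosh y - sinh y)
    (f' := fun y => (1 + y ^ 2 / 2 * cosh y - cosh y) + y ^ 3 / 6 * sinh y) (fun y => by
      have := ((hasDerivAt_id y).add (((hasDerivAt_pow 3 y).div_const 6).mul
        (Real.hasDerivAt_cosh y))).sub (Real.hasDerivAt_sinh y)
      exact this.congr_deriv (by push_cast; ring))
    (fun y hy => add_nonneg (by linarith [cosh_sub_one_le hy])
      (mul_nonneg (by positivity) (Real.sinh_nonneg_iff.2 hy))) hx
  simp at h; linarith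

private lemma cosh_sub_one_le_quartic {x : ℝ} (hx : 0 ≤ x) :
    cosh x - 1 ≤ x ^ 2 / 2 + x ^ 4 / 24 * cosh x := by
  have h := le_of_hasDerivAt_nonneg
    (f := fun y => y ^ 2 / 2 + y ^ 4 / 24 * cosh y + 1 - cosh y)
    (f' := fun y => (y + y ^ 3 / 6 * cosh y - sinh y) + y ^ 4 / 24 * sinh y) (fun y => by
      have := ((((hasDerivAt_pow 2 y).div_const 2).add (((hasDerivAt_pow 4 y).div_const 24).mul
        (Real.hasDerivAt_cosh y))).add_const 1).sub (Real.hasDerivAt_cosh y)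
      exact this.congr_deriv (by push_cast; ring))
    (fun y hy => add_nonneg (by linarith [sinh_le_cubic hy])
      (mul_nonneg (by positivity) (Real.sinh_nonneg_iff.2 hy))) hx
  simp at h; linarith

private lemma cosh_sqrt_two_le : cosh (Real.sqrt 2) ≤ 3 := by
  have h1 : Real.sqrt 2 ≤ 3 / 2 := by
    rw [show (3 / 2 : ℝ) = Real.sqrt ((3 / 2) ^ 2) from (Real.sqrt_sq (by norm_num)).symm]
    exact Real.sqrt_le_sqrt (by norm_num)
  have h2 : Real.exp 3 < 20.2 := by
    have := Real.exp_one_lt_d9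
    calc Real.exp 3 = Real.exp ((3:ℕ) * (1:ℝ)) := by norm_num
    _ = Real.exp 1 ^ 3 := Real.exp_nat_mul 1 3
    _ < 2.7182818286 ^ 3 := by gcongr <;> exact (Real.exp_pos 1).le
    _ < 20.2 := by norm_num
  have h3 : Real.exp (3 / 2) * Real.exp (3 / 2) = Real.exp 3 := by
    rw [← Real.exp_add]; norm_num
  have h4 : Real.exp (3 / 2) ≤ 5 := by nlinarith [Real.exp_pos (3 / 2)]
  have h5 : Real.exp (Real.sqrt 2) ≤ 5 := (Real.exp_le_exp.2 h1).trans h4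
  have h6 : Real.exp (-Real.sqrt 2) ≤ 1 :=
    Real.exp_le_one_iff.2 (neg_nonpos.2 (Real.sqrt_nonneg 2))
  rw [Real.cosh_eq]; linarith

private lemma cosh_key {x : ℝ} (hx0 : 0 ≤ x) (hx2 : x ≤ Real.sqrt 2) :
    cosh x - 1 ≤ 3 / 4 * x ^ 2 := by
  have hc : cosh x ≤ 3 := le_trans (Real.cosh_le_cosh.2 (by
    rw [abs_of_nonneg hx0, abs_of_nonneg (Real.sqrt_nonneg 2)]; exact hx2)) cosh_sqrt_two_le
  have hsq : x ^ 2 ≤ 2 := by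
    have := Real.sq_sqrt (by norm_num : (2:ℝ) ≥ 0)
    nlinarith [Real.sqrt_nonneg 2]
  have h := cosh_sub_one_le_quartic hx0
  have hx4 : x ^ 4 ≤ 2 * x ^ 2 := by nlinarith [sq_nonneg x]
  nlinarith [mul_nonneg (le_trans zero_le_one (Real.one_le_cosh x))
      (by linarith : (0:ℝ) ≤ 2 * x ^ 2 - x ^ 4),
    mul_nonneg (sq_nonneg x) (by linarith : (0:ℝ) ≤ 3 - cosh x)]


private lemma poisson_exp_hasSum (r : ℝ≥0) (c : ℝ) :
    HasSum (fun n : ℕ => poissonPMFReal r n * Real.exp (c * n))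
      (Real.exp (r * (Real.exp c - 1))) := by
  have heq : (fun n : ℕ => poissonPMFReal r n * Real.exp (c * n))
      = fun n : ℕ => Real.exp (-(r : ℝ)) * (((r : ℝ) * Real.exp c) ^ n / n.factorial) := by
    funext n
    rw [poissonPMFReal, mul_comm c (n:ℝ), Real.exp_nat_mul, mul_pow]
    ring
  rw [heq]
  have hs : HasSum (fun n : ℕ => ((r : ℝ) * Real.exp c) ^ n / n.factorial)
      (Real.exp ((r : ℝ) * Real.exp c)) := by
    rw [Real.exp_eq_exp_ℝ]
    exact NormedSpace.expSeries_div_hasSum_exp _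
  have := hs.mul_left (Real.exp (-(r : ℝ)))
  rwa [← Real.exp_add, show -(r:ℝ) + (r:ℝ) * Real.exp c = (r:ℝ) * (Real.exp c - 1) by ring]
    at this

private lemma poisson_exp_integrable (r : ℝ≥0) (c : ℝ) :
    Integrable (fun n : ℕ => Real.exp (c * n)) (poissonMeasure r) := by
  refine ⟨(measurable_of_countable _).aestronglyMeasurable, ?_⟩
  rw [HasFiniteIntegral, lintegral_countable']
  have hsing : ∀ n : ℕ, poissonMeasure r {n} = ENNReal.ofReal (poissonPMFReal r n) := fun n => by
    rw [poissonMeasure_singleton, poissonPMFReal]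
  have heq : ∀ n : ℕ, ‖Real.exp (c * n)‖ₑ * poissonMeasure r {n}
      = ENNReal.ofReal (poissonPMFReal r n * Real.exp (c * n)) := by
    intro n
    rw [hsing n, ← ofReal_norm, Real.norm_eq_abs,
      abs_of_pos (Real.exp_pos _), ← ENNReal.ofReal_mul (Real.exp_pos _).le, mul_comm]
  simp_rw [heq]
  rw [← ENNReal.ofReal_tsum_of_nonneg
    (fun n => mul_nonneg poissonPMFReal_nonneg (Real.exp_pos _).le)
    (poisson_exp_hasSum r c).summable]
  exact ENNReal.ofReal_lt_top

private lemma poisson_exp_integral (r : ℝ≥0) (c : ℝ) :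
    ∫ n, Real.exp (c * n) ∂(poissonMeasure r) = Real.exp (r * (Real.exp c - 1)) := by
  rw [integral_poissonMeasure' (poisson_exp_integrable r c)]
  have heq : ∀ n : ℕ, (Real.exp (-(r : ℝ)) * (r : ℝ) ^ n / n.factorial) • Real.exp (c * n)
      = poissonPMFReal r n * Real.exp (c * n) := by
    intro n
    rw [smul_eq_mul]
    rfl
  simp_rw [heq]
  exact (poisson_exp_hasSum r c).tsum_eq

private lemma skellam_exp_integrable (v : ℝ≥0) (c : ℝ) :
    Integrable (fun z : ℤ => Real.exp (c * z)) (skellamMeasure 0 v) := by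
  rw [skellamMeasure, integrable_map_measure (measurable_of_countable _).aestronglyMeasurable
    (measurable_of_countable _).aemeasurable]
  have heq : ((fun z : ℤ => Real.exp (c * z)) ∘ fun p : ℕ × ℕ => 0 + (p.1 : ℤ) - (p.2 : ℤ))
      = fun p : ℕ × ℕ => Real.exp (c * p.1) * Real.exp (-c * p.2) := by
    funext p
    simp only [Function.comp_apply]
    rw [← Real.exp_add]
    congr 1
    push_cast
    ring
  rw [heq]
  exact (poisson_exp_integrable _ c).mul_prod (poisson_exp_integrable _ (-c))

private lemma skellam_exp_integral (v : ℝ≥0) (c : ℝ) :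
    ∫ z, Real.exp (c * z) ∂(skellamMeasure 0 v)
      = Real.exp (v * (Real.cosh c - 1)) := by
  rw [skellamMeasure, integral_map (measurable_of_countable _).aemeasurable
    (measurable_of_countable _).aestronglyMeasurable]
  have heq : (fun p : ℕ × ℕ => Real.exp (c * ((0 : ℤ) + (p.1 : ℤ) - (p.2 : ℤ) : ℤ)))
      = fun p : ℕ × ℕ => Real.exp (c * p.1) * Real.exp (-c * p.2) := by
    funext p
    rw [← Real.exp_add]
    congr 1
    push_cast
    ring
  have h2 : ∫ p : ℕ × ℕ, Real.exp (c * p.1) * Real.exp (-c * p.2)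
      ∂(poissonMeasure (v / 2)).prod (poissonMeasure (v / 2))
      = (∫ n : ℕ, Real.exp (c * n) ∂poissonMeasure (v / 2))
        * ∫ n : ℕ, Real.exp (-c * n) ∂poissonMeasure (v / 2) :=
    integral_prod_mul (fun n : ℕ => Real.exp (c * n)) (fun n : ℕ => Real.exp (-c * n))
  rw [heq, h2, poisson_exp_integral, poisson_exp_integral, ← Real.exp_add, Real.cosh_eq]
  congr 1
  have : ((v / 2 : ℝ≥0) : ℝ) = (v : ℝ) / 2 := by push_cast; ring
  rw [this]
  ring

theorem skellam_tail_bound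
    {Ω : Type*} [MeasurableSpace Ω] (μ : Measure Ω) [IsProbabilityMeasure μ]
    (X : Ω → ℤ) (hX : Measurable X) (σ : ℝ≥0) (hσ : 0 < σ)
    (hXd : Measure.map X μ = skellamMeasure 0 (σ ^ 2)) :
    ∀ p : ℝ, p ∈ Set.Ioc (0 : ℝ) 1 →
      ENNReal.ofReal (1 - p) ≤
        μ {ω | (|X ω| : ℝ) ≤ 2 * σ * Real.sqrt (Real.log (2 / p))
              + Real.sqrt 2 * Real.log (2 / p)} := by
  intro p hp
  obtain ⟨hp0, hp1⟩ := hp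
  have hσR : (0 : ℝ) < σ := hσ
  set L := Real.log (2 / p) with hLdef
  have hL2 : Real.log 2 ≤ L := Real.log_le_log (by norm_num)
    (by rw [le_div_iff₀ hp0]; linarith)
  have hLpos : 0 < L := lt_of_lt_of_le (Real.log_pos one_lt_two) hL2
  set t := 2 * (σ : ℝ) * Real.sqrt L + Real.sqrt 2 * L with htdef
  set l := min (Real.sqrt L / σ) (Real.sqrt 2) with hldef
  have hl0 : 0 ≤ l := le_min (by positivity) (Real.sqrt_nonneg 2)
  have hl2 : l ≤ Real.sqrt 2 := min_le_right _ _
  have hLL : Real.sqrt L * Real.sqrt L = L := Real.mul_self_sqrt hLpos.le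
  have hlσ : (σ : ℝ) * l ≤ Real.sqrt L := by
    have h := min_le_left (Real.sqrt L / σ) (Real.sqrt 2)
    calc (σ : ℝ) * l ≤ (σ : ℝ) * (Real.sqrt L / σ) := by
          exact mul_le_mul_of_nonneg_left h hσR.le
    _ = Real.sqrt L := by field_simp
  have hlt : 2 * L ≤ l * t := by
    rcases min_cases (Real.sqrt L / σ) (Real.sqrt 2) with ⟨hmin, _⟩ | ⟨hmin, hge⟩
    · rw [hldef, hmin, htdef]
      have e1 : Real.sqrt L / σ * (2 * σ * Real.sqrt L) = 2 * L := by
        field_simp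
        nlinarith [hLL]
      nlinarith [mul_nonneg (mul_nonneg (div_nonneg (Real.sqrt_nonneg L) hσR.le)
        (Real.sqrt_nonneg 2)) hLpos.le]
    · rw [hldef, hmin, htdef]
      have e2 : Real.sqrt 2 * (Real.sqrt 2 * L) = 2 * L := by
        rw [← mul_assoc, Real.mul_self_sqrt (by norm_num)]
      nlinarith [mul_nonneg (mul_nonneg (Real.sqrt_nonneg 2)
        (mul_nonneg (by norm_num : (0:ℝ) ≤ 2) hσR.le)) (Real.sqrt_nonneg L)]
  have key : (σ : ℝ) ^ 2 * (Real.cosh l - 1) - l * t ≤ -L := by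
    have h1 : Real.cosh l - 1 ≤ 3 / 4 * l ^ 2 := cosh_key hl0 hl2
    have h2 : (σ : ℝ) ^ 2 * l ^ 2 ≤ L := by nlinarith [hlσ, mul_nonneg hσR.le hl0]
    nlinarith [mul_le_mul_of_nonneg_left h1 (sq_nonneg (σ : ℝ)),
      sq_nonneg ((σ : ℝ) * l), Real.one_le_cosh l]
  -- mgf computations
  have hmgf : ∀ c : ℝ, ∫ ω, Real.exp (c * (X ω : ℝ)) ∂μ
      = Real.exp ((σ : ℝ) ^ 2 * (Real.cosh c - 1)) := by
    intro c
    have h := skellam_exp_integral (σ ^ 2) c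
    rw [← hXd, integral_map hX.aemeasurable
      (measurable_of_countable _).aestronglyMeasurable] at h
    rw [h]
    norm_num
  have hint : ∀ c : ℝ, Integrable (fun ω => Real.exp (c * (X ω : ℝ))) μ := by
    intro c
    have h := skellam_exp_integrable (σ ^ 2) c
    rw [← hXd, integrable_map_measure (measurable_of_countable _).aestronglyMeasurable
      hX.aemeasurable] at h
    exact h
  set Y : Ω → ℝ := fun ω => (X ω : ℝ) with hYdef
  have hBp : Real.exp (-l * t) * Real.exp ((σ : ℝ) ^ 2 * (Real.cosh l - 1)) ≤ p / 2 := by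
    rw [← Real.exp_add]
    have h := Real.exp_le_exp.2 (show -l * t + (σ:ℝ)^2 * (Real.cosh l - 1) ≤ -L by linarith)
    refine h.trans ?_
    rw [hLdef, Real.exp_neg, Real.exp_log (by positivity), inv_div]
  -- upper tail
  have hup : (μ {ω | t ≤ Y ω}).toReal ≤ p / 2 := by
    have h := measure_ge_le_exp_mul_mgf (μ := μ) (X := Y) t hl0 (hint l)
    have hm : mgf Y μ l = Real.exp ((σ : ℝ) ^ 2 * (Real.cosh l - 1)) := hmgf l
    rw [hm] at h
    exact h.trans hBp
  -- lower tail
  have hdn : (μ {ω | t ≤ -Y ω}).toReal ≤ p / 2 := by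
    have hintneg : Integrable (fun ω => Real.exp (l * (-Y ω))) μ := by
      have := hint (-l)
      simpa only [neg_mul, mul_neg] using this
    have h := measure_ge_le_exp_mul_mgf (μ := μ) (X := fun ω => -Y ω) t hl0 hintneg
    have hm : mgf (fun ω => -Y ω) μ l = Real.exp ((σ : ℝ) ^ 2 * (Real.cosh l - 1)) := by
      have h1 : mgf (fun ω => -Y ω) μ l = ∫ ω, Real.exp ((-l) * Y ω) ∂μ := by
        rw [mgf]
        congr 1
        funext ω
        ring_nf
      rw [h1, hmgf (-l), Real.cosh_neg]
    rw [hm] at h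
    exact h.trans hBp
  -- assembly
  set E := {ω | (|X ω| : ℝ) ≤ t} with hEdef
  have hE : MeasurableSet E := by
    have : E = X ⁻¹' {z : ℤ | |(z : ℝ)| ≤ t} := rfl
    rw [this]
    exact hX (by trivial)
  have hsub : Eᶜ ⊆ {ω | t ≤ Y ω} ∪ {ω | t ≤ -Y ω} := by
    intro ω hω
    simp only [Set.mem_compl_iff, hEdef, Set.mem_setOf_eq, not_le] at hω
    rcases lt_abs.1 hω with h | h
    · exact Or.inl (le_of_lt h)
    · exact Or.inr (le_of_lt (by simpa using h))
  have hc : μ Eᶜ ≤ ENNReal.ofReal p := by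
    calc μ Eᶜ ≤ μ ({ω | t ≤ Y ω} ∪ {ω | t ≤ -Y ω}) := measure_mono hsub
    _ ≤ μ {ω | t ≤ Y ω} + μ {ω | t ≤ -Y ω} := measure_union_le _ _
    _ ≤ ENNReal.ofReal (p / 2) + ENNReal.ofReal (p / 2) := by
        refine add_le_add ?_ ?_ <;>
          exact (ENNReal.le_ofReal_iff_toReal_le (measure_ne_top μ _) (by positivity)).2
            (by assumption)
    _ = ENNReal.ofReal p := by
        rw [← ENNReal.ofReal_add (by positivity) (by positivity)]
        norm_num
  calc ENNReal.ofReal (1 - p) = 1 - ENNReal.ofReal p := by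
        rw [← ENNReal.ofReal_one, ← ENNReal.ofReal_sub _ hp0.le]
  _ ≤ 1 - μ Eᶜ := tsub_le_tsub_left hc 1
  _ = μ E := by
        rw [← prob_compl_eq_one_sub hE.compl, compl_compl]
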